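/- Let F be an undirected forest on n ≥ 2 vertices with p connected components and k ≥ 2, and suppose F has no isolated vertices. If P is a branching k-path vertex cover of F, then |P| ≥ (n + k + p(2k−1)) / (2k). -/

import Mathlib

/-- A rooted directed forest on vertex type `V`, given by a parent map
(edges are oriented from parent to child, i.e. away from the roots),
with no directed cycles. A root is a vertex with no parent. -/
structure RDForest (V : Type) where
  parent : V → Option V
  acyclic : ∀ v : V, ¬ Relation.TransGen (fun a b => parent b = some a) v v

namespace RDForest

variable {V : Type}

/-- Out-degree of a vertex: its number of children. -/
noncomputable def outDeg (F : RDForest V) (v : V) : ℕ :=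
  Nat.card {w | F.parent w = some v}

/-- A leaf is a vertex of out-degree 0. -/
def IsLeaf (F : RDForest V) (v : V) : Prop := F.outDeg v = 0

/-- A branching vertex is a vertex of out-degree at least 2. -/
def IsBranching (F : RDForest V) (v : V) : Prop := 2 ≤ F.outDeg v

/-- `p 0, p 1, …, p (k-1)` is a directed path on `k` vertices
(each successive vertex is a child of the previous one). -/
def IsDPath (F : RDForest V) (k : ℕ) (p : ℕ → V) : Prop :=
  ∀ i, i + 1 < k → F.parent (p (i + 1)) = some (p i)

/-- A branching `k`-path vertex cover of a rooted directed forest: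
all leaves belong to `P`, and every directed path on `k` vertices contains
a branching vertex or a vertex of `P`. -/
def IsBPVC (F : RDForest V) (k : ℕ) (P : Set V) : Prop :=
  (∀ v, F.IsLeaf v → v ∈ P) ∧
  ∀ p : ℕ → V, F.IsDPath k p →
    (∃ i < k, F.IsBranching (p i)) ∨ (∃ i < k, p i ∈ P)

end RDForest

namespace SimpleGraph

variable {V : Type}

/-- Degree of a vertex in an undirected graph. -/
noncomputable def udeg (G : SimpleGraph V) (v : V) : ℕ := Nat.card {w | G.Adj v w}

/-- `p 0, …, p (k-1)` is a path on `k` vertices: consecutive vertices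
are adjacent and all `k` vertices are distinct. -/
def IsUPath (G : SimpleGraph V) (k : ℕ) (p : ℕ → V) : Prop :=
  (∀ i, i + 1 < k → G.Adj (p i) (p (i + 1))) ∧
  (∀ i j, i < k → j < k → p i = p j → i = j)

/-- A branching `k`-path vertex cover of an undirected graph: all vertices of
degree at most 1 belong to `P`, and every path on `k` vertices contains a vertex
of degree at least 3 (a branching vertex) or a vertex of `P`. -/
def IsBPVC (G : SimpleGraph V) (k : ℕ) (P : Set V) : Prop :=
  (∀ v, G.udeg v ≤ 1 → v ∈ P) ∧
  ∀ p : ℕ → V, G.IsUPath k p →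
    (∃ i < k, 3 ≤ G.udeg (p i)) ∨ (∃ i < k, p i ∈ P)

end SimpleGraph


section BPVCauxSection
set_option linter.unusedSectionVars false
set_option maxHeartbeats 1000000
open SimpleGraph Finset
open scoped Classical

namespace BPVCaux


variable {V : Type} [Fintype V] {G : SimpleGraph V}

lemma uniq (hG : G.IsAcyclic) {x y : V} {w₁ w₂ : G.Walk x y}
    (h1 : w₁.IsPath) (h2 : w₂.IsPath) : w₁ = w₂ :=
  congrArg Subtype.val (hG.path_unique ⟨w₁, h1⟩ ⟨w₂, h2⟩)

lemma loop_nil {x : V} (w : G.Walk x x) (h : w.IsPath) : w.Nil := by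
  cases w with
  | nil => simp
  | cons hadj q =>
      exfalso
      have := h.support_nodup
      rw [SimpleGraph.Walk.support_cons] at this
      exact (List.nodup_cons.mp this).1 q.end_mem_support

section rooted

variable (r : V → V)

noncomputable def pii (hr : ∀ v, G.Reachable v (r v)) (v : V) : G.Walk v (r v) :=
  ((hr v).some).bypass

lemma pii_isPath (hr : ∀ v, G.Reachable v (r v)) (v : V) : (pii r hr v).IsPath :=
  SimpleGraph.Walk.bypass_isPath _

noncomputable def dep (hr : ∀ v, G.Reachable v (r v)) (v : V) : ℕ := (pii r hr v).length

noncomputable def pa (hr : ∀ v, G.Reachable v (r v)) (v : V) : Option V :=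
  if (pii r hr v).Nil then none else some ((pii r hr v).getVert 1)

variable (hr : ∀ v, G.Reachable v (r v))

lemma pa_none_iff (v : V) : pa r hr v = none ↔ r v = v := by
  constructor
  · intro h
    by_cases hnil : (pii r hr v).Nil
    · have := SimpleGraph.Walk.nil_iff_support_eq.mp hnil
      have h2 : r v ∈ (pii r hr v).support := (pii r hr v).end_mem_support
      rw [this] at h2
      simpa using h2
    · simp [pa, hnil] at h
  · intro h
    have hnil : ((pii r hr v).copy rfl h).Nil :=
      loop_nil _ ((SimpleGraph.Walk.isPath_copy _ _ _).mpr (pii_isPath r hr v))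
    have : (pii r hr v).Nil := by
      rw [SimpleGraph.Walk.nil_iff_length_eq] at hnil ⊢
      rwa [SimpleGraph.Walk.length_copy] at hnil
    simp [pa, this]

variable (hG : G.IsAcyclic) (hrc : ∀ v w : V, G.Reachable v w → r v = r w)

include hG hrc in
lemma pa_spec {v w : V} (h : pa r hr v = some w) :
    G.Adj v w ∧ dep r hr w + 1 = dep r hr v := by
  by_cases hnil : (pii r hr v).Nil
  · simp [pa, hnil] at h
  have hw : (pii r hr v).getVert 1 = w := by
    simpa [pa, hnil] using h
  have hadj : G.Adj v w := hw ▸ (SimpleGraph.Walk.adj_snd hnil : G.Adj v ((pii r hr v).getVert 1))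
  refine ⟨hadj, ?_⟩
  have hrvw : r v = r w := hrc v w hadj.reachable
  have htail := SimpleGraph.Walk.cons_tail_eq (pii r hr v) hnil
  have htp : (pii r hr v).tail.IsPath := by
    have h2 := pii_isPath r hr v
    rw [← htail] at h2
    exact h2.of_cons
  have hpiw : pii r hr w = ((pii r hr v).tail.copy hw hrvw) :=
    uniq hG (pii_isPath r hr w) ((SimpleGraph.Walk.isPath_copy _ _ _).mpr htp)
  have hlen : dep r hr w = (pii r hr v).tail.length := by
    rw [dep, hpiw, SimpleGraph.Walk.length_copy]
  rw [hlen, dep, SimpleGraph.Walk.length_tail_add_one hnil]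

include hG hrc in
lemma pa_or {v w : V} (hadj : G.Adj v w) :
    pa r hr w = some v ∨ pa r hr v = some w := by
  have hrvw : r v = r w := hrc v w hadj.reachable
  by_cases hw : w ∈ (pii r hr v).support
  · right
    have hD : ((pii r hr v).dropUntil w hw).IsPath := (pii_isPath r hr v).dropUntil hw
    have hv : v ∉ ((pii r hr v).dropUntil w hw).support := by
      intro hvd
      have hnd := (pii_isPath r hr v).support_nodup
      have hsp : (pii r hr v).support =
          ((pii r hr v).takeUntil w hw).support ++
            ((pii r hr v).dropUntil w hw).support.tail := by
        conv_lhs => rw [← SimpleGraph.Walk.take_spec (pii r hr v) hw]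
        rw [SimpleGraph.Walk.support_append]
      rw [hsp] at hnd
      have h1 : v ∈ ((pii r hr v).takeUntil w hw).support :=
        SimpleGraph.Walk.start_mem_support _
      have h2 : v ∈ ((pii r hr v).dropUntil w hw).support.tail := by
        have hcons := SimpleGraph.Walk.support_eq_cons ((pii r hr v).dropUntil w hw)
        rw [hcons, List.mem_cons] at hvd
        rcases hvd with h | h
        · exact (hadj.ne h).elim
        · exact h
      exact List.disjoint_of_nodup_append hnd h1 h2
    have heq : pii r hr v = SimpleGraph.Walk.cons hadj ((pii r hr v).dropUntil w hw) :=
      uniq hG (pii_isPath r hr v) (hD.cons hv)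
    have hnil : ¬ (pii r hr v).Nil := by
      rw [heq]; exact SimpleGraph.Walk.not_nil_cons
    rw [pa, if_neg hnil]
    congr 1
    rw [heq, SimpleGraph.Walk.getVert_cons_succ, SimpleGraph.Walk.getVert_zero]
  · left
    have hW : (SimpleGraph.Walk.cons hadj.symm (pii r hr v)).IsPath :=
      (pii_isPath r hr v).cons hw
    have heq : pii r hr w = (SimpleGraph.Walk.cons hadj.symm (pii r hr v)).copy rfl hrvw :=
      uniq hG (pii_isPath r hr w) ((SimpleGraph.Walk.isPath_copy _ _ _).mpr hW)
    have hnil : ¬ (pii r hr w).Nil := by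
      rw [SimpleGraph.Walk.nil_iff_length_eq, heq, SimpleGraph.Walk.length_copy]
      simp
    rw [pa, if_neg hnil]
    congr 1
    rw [heq, SimpleGraph.Walk.getVert_copy, SimpleGraph.Walk.getVert_cons_succ,
      SimpleGraph.Walk.getVert_zero]

end rooted



variable {V : Type} [Fintype V] {G : SimpleGraph V}

lemma exists_good_root (hG : G.IsAcyclic) :
    ∃ r : V → V, (∀ v, G.Reachable v (r v)) ∧ (∀ v w : V, G.Reachable v w → r v = r w) ∧
      (∀ v, G.udeg (r v) ≤ 1) := by
  set r0 : V → V := fun v => (G.connectedComponentMk v).out with hr0def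
  have hmkout : ∀ C : G.ConnectedComponent, G.connectedComponentMk C.out = C := by
    intro C
    exact Quot.out_eq C
  have hr0 : ∀ v, G.Reachable v (r0 v) := by
    intro v
    exact (SimpleGraph.ConnectedComponent.exact (hmkout (G.connectedComponentMk v))).symm
  have hrc0 : ∀ v w : V, G.Reachable v w → r0 v = r0 w := by
    intro v w h
    simp only [hr0def]
    rw [SimpleGraph.ConnectedComponent.sound h]
  have hex : ∀ C : G.ConnectedComponent,
      ∃ b ∈ Finset.univ.filter (fun u => G.connectedComponentMk u = C),
        ∀ a ∈ Finset.univ.filter (fun u => G.connectedComponentMk u = C),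
          dep r0 hr0 a ≤ dep r0 hr0 b := by
    intro C
    apply Finset.exists_max_image
    refine ⟨C.out, ?_⟩
    simp [hmkout]
  set F : G.ConnectedComponent → V := fun C => (hex C).choose with hF
  have hFmem : ∀ C, G.connectedComponentMk (F C) = C := by
    intro C
    exact (Finset.mem_filter.mp (hex C).choose_spec.1).2
  have hFmax : ∀ C, ∀ a, G.connectedComponentMk a = C → dep r0 hr0 a ≤ dep r0 hr0 (F C) := by
    intro C a ha
    exact (hex C).choose_spec.2 a (by simpa using ha)
  refine ⟨fun v => F (G.connectedComponentMk v), ?_, ?_, ?_⟩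
  · intro v
    exact (SimpleGraph.ConnectedComponent.exact (hFmem (G.connectedComponentMk v))).symm
  · intro v w h
    show F (G.connectedComponentMk v) = F (G.connectedComponentMk w)
    rw [SimpleGraph.ConnectedComponent.sound h]
  · intro v
    set w := F (G.connectedComponentMk v) with hw
    have hnb : ∀ u, G.Adj w u → pa r0 hr0 w = some u := by
      intro u hadj
      rcases pa_or r0 hr0 hG hrc0 hadj with h | h
      · exfalso
        have hd := (pa_spec r0 hr0 hG hrc0 h).2
        have hcu : G.connectedComponentMk u = G.connectedComponentMk v := by
          rw [SimpleGraph.ConnectedComponent.sound hadj.reachable.symm, hw, hFmem]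
        have hmax := hFmax (G.connectedComponentMk v) u hcu
        rw [← hw] at hmax
        omega
      · exact h
    show G.udeg w ≤ 1
    rw [SimpleGraph.udeg]
    rcases hpa : pa r0 hr0 w with _ | u
    · have hemp : {x | G.Adj w x} = ∅ := by
        ext x
        simp only [Set.mem_setOf_eq, Set.mem_empty_iff_false, iff_false]
        intro hx
        rw [hnb x hx] at hpa
        exact nomatch hpa
      rw [hemp]
      simp
    · have hsub : {x | G.Adj w x} ⊆ {u} := by
        intro x hx
        have hx2 := hnb x hx
        rw [hpa] at hx2
        simp at hx2 ⊢
        exact hx2.symm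
      calc Nat.card {x | G.Adj w x} = ({x | G.Adj w x} : Set V).ncard :=
            Nat.card_coe_set_eq _
        _ ≤ ({u} : Set V).ncard := Set.ncard_le_ncard hsub (Set.finite_singleton u)
        _ = 1 := Set.ncard_singleton u


end BPVCaux

/-- Refined undirected lower bound: if an undirected forest on `n ≥ 2` vertices has
`p` connected components and no isolated vertices, then every branching `k`-path
vertex cover has at least `(n + k + p(2k-1))/(2k)` vertices. -/
theorem stmt15 {V : Type} [Fintype V] (G : SimpleGraph V) (hG : G.IsAcyclic)
    (k : ℕ) (hk : 2 ≤ k) (hn : 2 ≤ Nat.card V)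
    (p : ℕ) (hp : p = Nat.card G.ConnectedComponent)
    (hiso : ∀ v : V, 1 ≤ G.udeg v)
    (P : Set V) (hP : G.IsBPVC k P) :
    ((Nat.card V : ℚ) + k + p * (2 * k - 1)) / (2 * k) ≤ P.ncard := by
  classical
  obtain ⟨r, hr, hrc, hrleaf⟩ := BPVCaux.exists_good_root hG
  set S : Set V := P ∪ {v | 3 ≤ G.udeg v} with hS
  have hudeg_card : ∀ v : V, G.udeg v = (univ.filter (fun w => G.Adj v w)).card := by
    intro v
    rw [SimpleGraph.udeg, Nat.card_coe_set_eq, Set.ncard_eq_toFinset_card']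
    congr 1
    ext w; simp
  have hnotP : ∀ v, v ∉ P → 2 ≤ G.udeg v := by
    intro v hv
    by_contra h
    exact hv (hP.1 v (by omega))
  have hpa_adj : ∀ {v w : V}, BPVCaux.pa r hr v = some w → G.Adj v w :=
    fun h => (BPVCaux.pa_spec r hr hG hrc h).1
  have hpa_dep : ∀ {v w : V}, BPVCaux.pa r hr v = some w →
      BPVCaux.dep r hr w + 1 = BPVCaux.dep r hr v :=
    fun h => (BPVCaux.pa_spec r hr hG hrc h).2
  -- child existence for vertices outside S
  have hchild : ∀ v, v ∉ S → ∃ w, BPVCaux.pa r hr w = some v := by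
    intro v hv
    have hvP : v ∉ P := fun h => hv (Or.inl h)
    have h2 : 2 ≤ G.udeg v := hnotP v hvP
    rcases hpa : BPVCaux.pa r hr v with _ | u
    · have hposn : 0 < (univ.filter (fun w => G.Adj v w)).card := by
        rw [← hudeg_card]; omega
      obtain ⟨w, hw⟩ := Finset.card_pos.mp hposn
      have hadj : G.Adj v w := (Finset.mem_filter.mp hw).2
      rcases BPVCaux.pa_or r hr hG hrc hadj with h | h
      · exact ⟨w, h⟩
      · rw [hpa] at h; exact nomatch h
    · have hucard : 2 ≤ (univ.filter (fun w => G.Adj v w)).card := by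
        rw [← hudeg_card]; omega
      have hpose : 0 < ((univ.filter (fun w => G.Adj v w)).erase u).card := by
        have := Finset.pred_card_le_card_erase
          (s := univ.filter (fun w => G.Adj v w)) (a := u)
        omega
      obtain ⟨w, hw⟩ := Finset.card_pos.mp hpose
      have hwne : w ≠ u := Finset.ne_of_mem_erase hw
      have hadj : G.Adj v w := (Finset.mem_filter.mp (Finset.mem_of_mem_erase hw)).2
      rcases BPVCaux.pa_or r hr hG hrc hadj with h | h
      · exact ⟨w, h⟩
      · rw [hpa] at h
        exact absurd (Option.some.inj h).symm hwne
  -- step function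
  set c : V → V := fun v => if h : ∃ w, BPVCaux.pa r hr w = some v then h.choose else v with hc
  have hcspec : ∀ v, v ∉ S → BPVCaux.pa r hr (c v) = some v := by
    intro v hv
    have h := hchild v hv
    simp only [hc, dif_pos h]
    exact h.choose_spec
  set g : V → V := fun v => if v ∈ S then v else c v with hg
  have hgS : ∀ v, v ∉ S → BPVCaux.pa r hr (g v) = some v := by
    intro v hv
    simp only [hg, if_neg hv]
    exact hcspec v hv
  have hgdep : ∀ v, v ∉ S →
      BPVCaux.dep r hr (g v) = BPVCaux.dep r hr v + 1 := by
    intro v hv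
    have := hpa_dep (hgS v hv); omega
  -- from every vertex, the chain reaches S within k steps
  have hE : ∀ v, ∃ m, m < k ∧ g^[m] v ∈ S := by
    intro v
    by_contra hcon
    push_neg at hcon
    have hdep : ∀ i, i < k → BPVCaux.dep r hr (g^[i] v) = BPVCaux.dep r hr v + i := by
      intro i
      induction i with
      | zero => intro _; simp
      | succ j ih =>
          intro hj
          rw [Function.iterate_succ_apply']
          rw [hgdep _ (hcon j (by omega)), ih (by omega)]
          omega
    have hup : G.IsUPath k (fun i => g^[i] v) := by
      constructor
      · intro i hi
        have hiS : g^[i] v ∉ S := hcon i (by omega)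
        have hstep : g^[i+1] v = g (g^[i] v) := Function.iterate_succ_apply' g i v
        simp only [hstep]
        exact (hpa_adj (hgS _ hiS)).symm
      · intro i j hi hj hij
        have h1 := hdep i hi
        have h2 := hdep j hj
        simp only at hij
        rw [hij] at h1
        omega
    rcases hP.2 _ hup with ⟨i, hi, hbr⟩ | ⟨i, hi, hmem⟩
    · exact hcon i hi (Or.inr hbr)
    · exact hcon i hi (Or.inl hmem)
  have hEx : ∀ v : V, ∃ m, g^[m] v ∈ S := fun v => (hE v).elim (fun m hm => ⟨m, hm.2⟩)
  set N : V → ℕ := fun v => Nat.find (hEx v) with hN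
  set f : V → V := fun v => g^[N v] v with hf
  have hfS : ∀ v, f v ∈ S := fun v => Nat.find_spec (hEx v)
  have hNk : ∀ v, N v < k := by
    intro v
    obtain ⟨m, hmk, hmS⟩ := hE v
    exact lt_of_le_of_lt (Nat.find_min' (hEx v) hmS) hmk
  have hN0 : ∀ v, v ∈ S → N v = 0 := fun v hv => (Nat.find_eq_zero (hEx v)).mpr hv
  have hN0' : ∀ v, N v = 0 → v ∈ S := by
    intro v hv
    have := Nat.find_spec (hEx v)
    rw [show Nat.find (hEx v) = N v from rfl, hv] at this
    exact this
  have hiter : ∀ (m : ℕ) (v : V), g^[m] (g v) = g^[m+1] v := by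
    intro m v; rw [Function.iterate_succ_apply]
  have hNsucc : ∀ v, v ∉ S → N v = N (g v) + 1 := by
    intro v hv
    have h1 : N v ≠ 0 := fun h => hv (hN0' v h)
    have hspec : g^[N v] v ∈ S := Nat.find_spec (hEx v)
    have h2 : N (g v) ≤ N v - 1 := by
      apply Nat.find_min'
      rw [hiter]
      have e : N v - 1 + 1 = N v := by omega
      rw [e]
      exact hspec
    have h3 : N v ≤ N (g v) + 1 := by
      apply Nat.find_min'
      rw [← hiter]
      exact Nat.find_spec (hEx (g v))
    exact Nat.le_antisymm h3
      (Nat.succ_le_of_lt (lt_of_le_of_lt h2 (Nat.sub_lt (Nat.pos_of_ne_zero h1) one_pos)))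
  have hfg : ∀ v, v ∉ S → f v = f (g v) := by
    intro v hv
    simp only [hf]
    rw [hNsucc v hv, ← hiter]
  have hinj : ∀ m, ∀ v w : V, N v = m → N w = m → f v = f w → v = w := by
    intro m
    induction m with
    | zero =>
        intro v w hv hw hfvw
        have e1 : f v = v := by simp only [hf, hv, Function.iterate_zero_apply]
        have e2 : f w = w := by simp only [hf, hw, Function.iterate_zero_apply]
        rw [e1, e2] at hfvw
        exact hfvw
    | succ m ih =>
        intro v w hv hw hfvw
        have hvS : v ∉ S := fun h => by rw [hN0 v h] at hv; omega
        have hwS : w ∉ S := fun h => by rw [hN0 w h] at hw; omega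
        have hgeq : g v = g w := by
          apply ih (g v) (g w)
          · have := hNsucc v hvS; omega
          · have := hNsucc w hwS; omega
          · rw [← hfg v hvS, ← hfg w hwS]; exact hfvw
        have h1 := hgS v hvS
        have h2 := hgS w hwS
        rw [hgeq] at h1
        rw [h1] at h2
        exact Option.some.inj h2
  -- roots
  set R : Finset V := univ.filter (fun v => r v = v) with hR
  have hRP : ∀ v ∈ R, v ∈ P := by
    intro v hv
    have hrv : r v = v := (Finset.mem_filter.mp hv).2
    apply hP.1
    have := hrleaf v
    rwa [hrv] at this
  have hfroot : ∀ v, f v ∈ R → N v = 0 := by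
    intro v hv
    by_contra h0
    have h1 : N v - 1 + 1 = N v := Nat.succ_pred_eq_of_pos (Nat.pos_of_ne_zero h0)
    have hx : g^[N v - 1] v ∉ S :=
      Nat.find_min (hEx v) (by show N v - 1 < N v; omega)
    have hfe : f v = g (g^[N v - 1] v) := by
      simp only [hf]
      conv_lhs => rw [← h1]
      rw [Function.iterate_succ_apply']
    have hpaf : BPVCaux.pa r hr (f v) = some (g^[N v - 1] v) := by
      rw [hfe]; exact hgS _ hx
    have hroot : r (f v) = f v := (Finset.mem_filter.mp hv).2
    rw [(BPVCaux.pa_none_iff r hr (f v)).mpr hroot] at hpaf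
    exact nomatch hpaf
  -- counting injection
  set Sf : Finset V := S.toFinset with hSf
  have hRS : R ⊆ Sf := by
    intro v hv
    rw [hSf, Set.mem_toFinset]
    exact Or.inl (hRP v hv)
  set T : Finset (V × ℕ) := ((Sf \ R) ×ˢ Finset.range k) ∪ R ×ˢ {0} with hT
  have hmaps : ∀ v : V, (f v, N v) ∈ T := by
    intro v
    by_cases hvR : f v ∈ R
    · apply Finset.mem_union_right
      rw [Finset.mem_product]
      exact ⟨hvR, by simp [hfroot v hvR]⟩
    · apply Finset.mem_union_left
      rw [Finset.mem_product]
      exact ⟨Finset.mem_sdiff.mpr ⟨by rw [hSf, Set.mem_toFinset]; exact hfS v, hvR⟩,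
        Finset.mem_range.mpr (hNk v)⟩
  have hcard1 : Fintype.card V ≤ T.card := by
    rw [← Finset.card_univ]
    apply Finset.card_le_card_of_injOn (fun v => (f v, N v)) (fun v _ => hmaps v)
    intro v _ w _ h
    have h1 : f v = f w := congrArg Prod.fst h
    have h2 : N v = N w := congrArg Prod.snd h
    exact hinj (N w) v w h2 rfl h1
  have hcard2 : T.card ≤ (Sf.card - R.card) * k + R.card := by
    calc T.card ≤ ((Sf \ R) ×ˢ Finset.range k).card + (R ×ˢ ({0} : Finset ℕ)).card :=
          Finset.card_union_le _ _
      _ = (Sf.card - R.card) * k + R.card := by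
          rw [Finset.card_product, Finset.card_product, Finset.card_range,
            Finset.card_sdiff_of_subset hRS]
          simp
  -- degree sum identities
  set odF : V → ℕ := fun v => (univ.filter (fun w => BPVCaux.pa r hr w = some v)).card with hod
  set NR : Finset V := univ.filter (fun w => ¬ r w = w) with hNR
  have hNRcard : NR.card + R.card = Fintype.card V := by
    have h := Finset.card_filter_add_card_filter_not
      (s := (univ : Finset V)) (p := fun v : V => r v = v)
    rw [Finset.card_univ] at h
    rw [← hR, ← hNR] at h
    omega
  have hsum1 : ∑ v : V, odF v = NR.card := by
    have hfib := Finset.card_eq_sum_card_fiberwise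
      (s := NR) (t := univ) (f := fun w => (BPVCaux.pa r hr w).getD w)
      (fun x _ => Finset.mem_univ _)
    rw [hfib]
    apply Finset.sum_congr rfl
    intro v _
    simp only [hod]
    congr 1
    ext w
    simp only [Finset.mem_filter, Finset.mem_univ, true_and, hNR]
    constructor
    · intro hw
      have hne : ¬ r w = w := by
        intro hroot
        rw [(BPVCaux.pa_none_iff r hr w).mpr hroot] at hw
        exact nomatch hw
      refine ⟨hne, ?_⟩
      rw [hw]
      rfl
    · rintro ⟨hne, hgd⟩
      have hnn : BPVCaux.pa r hr w ≠ none :=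
        fun h => hne ((BPVCaux.pa_none_iff r hr w).mp h)
      obtain ⟨u, hu⟩ := Option.ne_none_iff_exists'.mp hnn
      rw [hu] at hgd ⊢
      simp only [Option.getD_some] at hgd
      rw [hgd]
  have hdeg_split : ∀ v : V, G.udeg v = odF v + (if r v = v then 0 else 1) := by
    intro v
    rw [hudeg_card]
    rcases hpa : BPVCaux.pa r hr v with _ | u
    · have hroot := (BPVCaux.pa_none_iff r hr v).mp hpa
      rw [if_pos hroot, Nat.add_zero]
      have heq : univ.filter (fun w => G.Adj v w)
          = univ.filter (fun w => BPVCaux.pa r hr w = some v) := by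
        ext w
        simp only [Finset.mem_filter, Finset.mem_univ, true_and]
        constructor
        · intro hadj
          rcases BPVCaux.pa_or r hr hG hrc hadj with h | h
          · exact h
          · rw [hpa] at h; exact nomatch h
        · intro h
          exact (hpa_adj h).symm
      rw [heq]
    · have hroot : ¬ r v = v := by
        intro h
        rw [(BPVCaux.pa_none_iff r hr v).mpr h] at hpa
        exact nomatch hpa
      rw [if_neg hroot]
      have hnotmem : u ∉ univ.filter (fun w => BPVCaux.pa r hr w = some v) := by
        intro hu
        have h1 := hpa_dep (Finset.mem_filter.mp hu).2
        have h2 := hpa_dep hpa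
        omega
      have heq : univ.filter (fun w => G.Adj v w)
          = insert u (univ.filter (fun w => BPVCaux.pa r hr w = some v)) := by
        ext w
        simp only [Finset.mem_insert, Finset.mem_filter, Finset.mem_univ, true_and]
        constructor
        · intro hadj
          rcases BPVCaux.pa_or r hr hG hrc hadj with h | h
          · exact Or.inr h
          · rw [hpa] at h
            exact Or.inl (Option.some.inj h).symm
        · rintro (rfl | h)
          · exact hpa_adj hpa
          · exact (hpa_adj h).symm
      rw [heq, Finset.card_insert_of_notMem hnotmem]
  have hsum2 : ∑ v : V, G.udeg v = NR.card + NR.card := by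
    calc ∑ v : V, G.udeg v = ∑ v : V, (odF v + (if r v = v then 0 else 1)) :=
          Finset.sum_congr rfl (fun v _ => hdeg_split v)
      _ = (∑ v : V, odF v) + ∑ v : V, (if r v = v then 0 else 1) :=
          Finset.sum_add_distrib
      _ = NR.card + NR.card := by
          rw [hsum1]
          congr 1
          rw [hNR, Finset.card_filter]
          apply Finset.sum_congr rfl
          intro v _
          by_cases h : r v = v <;> simp [h]
  -- classify vertices by degree
  set Lf : Finset V := univ.filter (fun v => G.udeg v = 1) with hLf
  set Mf : Finset V := univ.filter (fun v => G.udeg v = 2) with hMf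
  set Bf : Finset V := univ.filter (fun v => 3 ≤ G.udeg v) with hBf
  have hpart : Lf.card + (Mf.card + Bf.card) = Fintype.card V := by
    rw [hLf, hMf, hBf, Finset.card_filter, Finset.card_filter, Finset.card_filter,
      ← Finset.sum_add_distrib, ← Finset.sum_add_distrib]
    rw [Finset.sum_congr rfl (fun v _ => ?_), Finset.sum_const, smul_eq_mul,
      mul_one, Finset.card_univ]
    have := hiso v
    split_ifs <;> omega
  have hsum3 : Lf.card + (2 * Mf.card + 3 * Bf.card) ≤ ∑ v : V, G.udeg v := by
    rw [hLf, hMf, hBf, Finset.card_filter, Finset.card_filter, Finset.card_filter,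
      Finset.mul_sum, Finset.mul_sum, ← Finset.sum_add_distrib, ← Finset.sum_add_distrib]
    apply Finset.sum_le_sum
    intro v _
    have := hiso v
    split_ifs <;> omega
  have hLP : Lf ⊆ P.toFinset := by
    intro v hv
    rw [Set.mem_toFinset]
    exact hP.1 v (le_of_eq (Finset.mem_filter.mp hv).2)
  have hScard : Sf.card ≤ P.toFinset.card + Bf.card := by
    have hsub : Sf ⊆ P.toFinset ∪ Bf := by
      intro v hv
      rw [hSf, Set.mem_toFinset] at hv
      rcases hv with h | h
      · exact Finset.mem_union_left _ (Set.mem_toFinset.mpr h)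
      · exact Finset.mem_union_right _ (Finset.mem_filter.mpr ⟨Finset.mem_univ _, h⟩)
    calc Sf.card ≤ (P.toFinset ∪ Bf).card := Finset.card_le_card hsub
      _ ≤ _ := Finset.card_union_le _ _
  -- p equals the number of roots
  have hrr : ∀ v : V, r (r v) = r v := fun v => (hrc v (r v) (hr v)).symm
  have hpR : p = R.card := by
    have hbij : Function.Bijective
        (fun C : G.ConnectedComponent => (⟨r C.out, hrr C.out⟩ : {v : V | r v = v})) := by
      constructor
      · intro C C' hCC'
        have h1 : r C.out = r C'.out := congrArg Subtype.val hCC'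
        have e1 : G.connectedComponentMk (r C.out) = C := by
          rw [← SimpleGraph.ConnectedComponent.sound (hr C.out)]
          exact Quot.out_eq C
        have e2 : G.connectedComponentMk (r C'.out) = C' := by
          rw [← SimpleGraph.ConnectedComponent.sound (hr C'.out)]
          exact Quot.out_eq C'
        rw [← e1, ← e2, h1]
      · rintro ⟨v, hv⟩
        refine ⟨G.connectedComponentMk v, ?_⟩
        have hreach : G.Reachable (G.connectedComponentMk v).out v :=
          SimpleGraph.ConnectedComponent.exact (Quot.out_eq _)
        have : r (G.connectedComponentMk v).out = v := by
          rw [hrc _ _ hreach, hv]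
        exact Subtype.ext this
    have h1 : Nat.card G.ConnectedComponent = Nat.card {v : V | r v = v} :=
      Nat.card_eq_of_bijective _ hbij
    have h2 : Nat.card {v : V | r v = v} = R.card := by
      rw [Nat.card_coe_set_eq, Set.ncard_eq_toFinset_card']
      congr 1
      ext v
      simp [hR]
    rw [hp, h1, h2]
  -- assemble
  have hR1 : 1 ≤ R.card := by
    have hne : (0 : ℕ) < Fintype.card V := by
      rw [← Nat.card_eq_fintype_card]; omega
    have hV : Nonempty V := Fintype.card_pos_iff.mp hne
    obtain ⟨v⟩ := hV
    apply Finset.card_pos.mpr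
    exact ⟨r v, Finset.mem_filter.mpr ⟨Finset.mem_univ _, hrr v⟩⟩
  have hRSle : R.card ≤ Sf.card := Finset.card_le_card hRS
  have hmul : (Sf.card - R.card) * k + R.card * k = Sf.card * k := by
    rw [← Nat.add_mul, Nat.sub_add_cancel hRSle]
  -- key numeric facts
  have F1 : Fintype.card V + R.card * k ≤ Sf.card * k + R.card := by
    have := le_trans hcard1 hcard2
    omega
  have F3 : Bf.card + 2 * R.card ≤ Lf.card := by omega
  have F4 : Lf.card ≤ P.toFinset.card := Finset.card_le_card hLP
  have F6 : Sf.card + 2 * R.card ≤ 2 * P.toFinset.card := by omega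
  -- now pass to ℚ
  have hncard : (P.ncard : ℚ) = (P.toFinset.card : ℚ) := by
    rw [Set.ncard_eq_toFinset_card']
  rw [div_le_iff₀ (by positivity : (0 : ℚ) < 2 * (k : ℚ))]
  rw [Nat.card_eq_fintype_card, hncard, hpR]
  have c1 : (Fintype.card V : ℚ) + (R.card : ℚ) * k ≤ (Sf.card : ℚ) * k + R.card := by
    exact_mod_cast F1
  have c2 : (Sf.card : ℚ) + 2 * R.card ≤ 2 * P.toFinset.card := by exact_mod_cast F6
  have c3 : (1 : ℚ) ≤ (R.card : ℚ) := by exact_mod_cast hR1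
  have c4 : (2 : ℚ) ≤ (k : ℚ) := by exact_mod_cast hk
  have hk0 : (0 : ℚ) ≤ (k : ℚ) := by linarith
  have c2k : ((Sf.card : ℚ) + 2 * R.card) * k ≤ (2 * P.toFinset.card) * k :=
    mul_le_mul_of_nonneg_right c2 hk0
  have c3k : (1 : ℚ) * k ≤ (R.card : ℚ) * k := mul_le_mul_of_nonneg_right c3 hk0
  nlinarith [c1, c2k, c3k]

end BPVCauxSection
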